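/- Let Γ be a finitely generated group of polynomial growth r with word-length function L, and let D be the (unbounded) multiplication operator by L on ℓ²(Γ). Then D is self-adjoint with compact resolvent, and (1 + D²)^{-p/2} is trace class for every p > r + 1. -/

import Mathlib

open ContinuousLinearMap
open scoped InnerProductSpace LinearPMap

/-- The word-length function on a group `Γ` relative to a generating set `S`. -/
noncomputable def wordLength {Γ : Type*} [Group Γ] (S : Set Γ) (g : Γ) : ℕ :=
  sInf {n | ∃ l : List Γ, l.length = n ∧ (∀ x ∈ l, x ∈ S) ∧ l.prod = g}

/-- The `m`-th singular value (approximation number) of an operator `T` on a Hilbert space. -/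
noncomputable def sv {H : Type*} [NormedAddCommGroup H] [InnerProductSpace ℂ H]
    (T : H →L[ℂ] H) (m : ℕ) : ℝ :=
  ⨅ F : {F : H →L[ℂ] H // FiniteDimensional ℂ (LinearMap.range (F : H →ₗ[ℂ] H)) ∧
          Module.finrank ℂ (LinearMap.range (F : H →ₗ[ℂ] H)) ≤ m}, ‖T - F.1‖

namespace SpecHelp

variable {ι : Type*}

theorem two_toReal : (2 : ENNReal).toReal = 2 := by norm_num

theorem sq_term_le {a : ι → ℂ} {B : ℝ} (ha : ∀ i, ‖a i‖ ≤ B) (f : ι → ℂ) (i : ι) :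
    ‖a i * f i‖ ^ (2:ℝ) ≤ B ^ (2:ℝ) * ‖f i‖ ^ (2:ℝ) := by
  rw [norm_mul, Real.mul_rpow (norm_nonneg _) (norm_nonneg _)]
  exact mul_le_mul_of_nonneg_right
    (Real.rpow_le_rpow (norm_nonneg _) (ha i) (by norm_num))
    (Real.rpow_nonneg (norm_nonneg _) _)

theorem memℓp_mul {a : ι → ℂ} {B : ℝ} (ha : ∀ i, ‖a i‖ ≤ B) (f : lp (fun _ : ι => ℂ) 2) :
    Memℓp (fun i => a i * f i) 2 := by
  apply memℓp_gen
  rw [two_toReal]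
  have hs : Summable fun i => B ^ (2:ℝ) * ‖f i‖ ^ (2:ℝ) :=
    (((lp.memℓp f).summable (by rw [two_toReal]; norm_num)).mul_left _)
  exact Summable.of_nonneg_of_le (fun i => Real.rpow_nonneg (norm_nonneg _) _)
    (fun i => sq_term_le ha f i) hs

/-- Multiplication by a bounded sequence as a continuous linear map on `ℓ²`. -/
noncomputable def mulOp (a : ι → ℂ) {B : ℝ} (hB : 0 ≤ B) (ha : ∀ i, ‖a i‖ ≤ B) :
    (lp (fun _ : ι => ℂ) 2) →L[ℂ] (lp (fun _ : ι => ℂ) 2) :=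
  LinearMap.mkContinuous
    { toFun := fun f => ⟨fun i => a i * f i, memℓp_mul ha f⟩
      map_add' := by
        intro f g; apply lp.ext; funext i
        change a i * (f + g : lp _ 2) i = a i * f i + a i * g i
        rw [lp.coeFn_add]; simp [mul_add]
      map_smul' := by
        intro c f; apply lp.ext; funext i
        change a i * (c • f : lp _ 2) i = (c • _ : lp (fun _ : ι => ℂ) 2) i
        rw [lp.coeFn_smul, lp.coeFn_smul]
        change a i * (c * f i) = c * (a i * f i)
        ring } B
    (by
      intro f
      refine lp.norm_le_of_forall_sum_le (by rw [two_toReal]; norm_num) (by positivity) fun s => ?_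
      rw [two_toReal]
      calc ∑ i ∈ s, ‖a i * f i‖ ^ (2:ℝ) ≤ ∑ i ∈ s, B ^ (2:ℝ) * ‖f i‖ ^ (2:ℝ) :=
            Finset.sum_le_sum fun i _ => sq_term_le ha f i
        _ = B ^ (2:ℝ) * ∑ i ∈ s, ‖f i‖ ^ (2:ℝ) := by rw [Finset.mul_sum]
        _ ≤ B ^ (2:ℝ) * ‖f‖ ^ (2:ℝ) := by
            refine mul_le_mul_of_nonneg_left ?_ (Real.rpow_nonneg hB _)
            have := lp.sum_rpow_le_norm_rpow (p := 2) (by rw [two_toReal]; norm_num) f s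
            rwa [two_toReal] at this
        _ = (B * ‖f‖) ^ (2:ℝ) := (Real.mul_rpow hB (norm_nonneg _)).symm)

theorem mulOp_apply (a : ι → ℂ) {B : ℝ} (hB : 0 ≤ B) (ha : ∀ i, ‖a i‖ ≤ B)
    (f : lp (fun _ : ι => ℂ) 2) (i : ι) : (mulOp a hB ha f : ∀ _ : ι, ℂ) i = a i * f i := rfl

theorem mulOp_norm_le (a : ι → ℂ) {B : ℝ} (hB : 0 ≤ B) (ha : ∀ i, ‖a i‖ ≤ B) :
    ‖mulOp a hB ha‖ ≤ B := LinearMap.mkContinuous_norm_le _ hB _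

theorem mulOp_sub (a b : ι → ℂ) {B B' B'' : ℝ} (hB : 0 ≤ B) (hB' : 0 ≤ B') (hB'' : 0 ≤ B'')
    (ha : ∀ i, ‖a i‖ ≤ B) (hb : ∀ i, ‖b i‖ ≤ B') (hab : ∀ i, ‖a i - b i‖ ≤ B'') :
    mulOp a hB ha - mulOp b hB' hb = mulOp (fun i => a i - b i) hB'' hab := by
  refine ContinuousLinearMap.ext fun f => ?_
  apply lp.ext; funext i
  have : ((mulOp a hB ha f - mulOp b hB' hb f : lp (fun _ : ι => ℂ) 2) : ∀ _ : ι, ℂ) i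
      = a i * f i - b i * f i := by
    rw [lp.coeFn_sub]; simp [mulOp_apply]
  rw [ContinuousLinearMap.sub_apply]
  rw [this, mulOp_apply]
  ring

theorem mulOp_finrank [DecidableEq ι] (a : ι → ℂ)
    (M : (lp (fun _ : ι => ℂ) 2) →L[ℂ] (lp (fun _ : ι => ℂ) 2))
    (hM : ∀ f : lp (fun _ : ι => ℂ) 2, ∀ i, (M f : ∀ _ : ι, ℂ) i = a i * f i)
    (s : Finset ι) (hsupp : ∀ i, i ∉ s → a i = 0) :
    FiniteDimensional ℂ (LinearMap.range (M : (lp (fun _ : ι => ℂ) 2) →ₗ[ℂ] (lp (fun _ : ι => ℂ) 2))) ∧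
      Module.finrank ℂ (LinearMap.range (M : (lp (fun _ : ι => ℂ) 2) →ₗ[ℂ] (lp (fun _ : ι => ℂ) 2))) ≤ s.card := by
  classical
  set V := Submodule.span ℂ ((s.image fun i => lp.single 2 i (1:ℂ)) : Set (lp (fun _ : ι => ℂ) 2)) with hV
  have hrange : LinearMap.range (M : (lp (fun _ : ι => ℂ) 2) →ₗ[ℂ] (lp (fun _ : ι => ℂ) 2)) ≤ V := by
    rintro _ ⟨f, rfl⟩
    have hEq : M f = ∑ i ∈ s, (a i * f i) • lp.single 2 i (1:ℂ) := by
      apply lp.ext; funext j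
      rw [hM]
      have hcoe : ((∑ i ∈ s, (a i * f i) • lp.single 2 i (1:ℂ) : lp (fun _ : ι => ℂ) 2) : ∀ _ : ι, ℂ) j
          = ∑ i ∈ s, (a i * f i) • (lp.single 2 i (1:ℂ) : ∀ _ : ι, ℂ) j := by
        rw [lp.coeFn_sum]
        simp [lp.coeFn_smul]
      rw [hcoe]
      by_cases hj : j ∈ s
      · rw [Finset.sum_eq_single j]
        · simp [lp.single_apply_self]
        · intro i _ hij
          rw [lp.single_apply_ne 2 i _ (Ne.symm hij)]; simp
        · intro h; exact absurd hj h
      · rw [hsupp j hj, Finset.sum_eq_zero]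
        · simp
        · intro i hi
          rw [lp.single_apply_ne 2 i _ (fun h => hj (by rw [h]; exact hi))]; simp
    rw [ContinuousLinearMap.coe_coe, hEq]
    exact Submodule.sum_mem _ fun i hi =>
      Submodule.smul_mem _ _ (Submodule.subset_span (by
        rw [Finset.coe_image]; exact ⟨i, hi, rfl⟩))
  have hVfd : FiniteDimensional ℂ V :=
    FiniteDimensional.span_of_finite ℂ (s.image fun i => lp.single 2 i (1:ℂ)).finite_toSet
  have h1 : FiniteDimensional ℂ (LinearMap.range (M : (lp (fun _ : ι => ℂ) 2) →ₗ[ℂ] (lp (fun _ : ι => ℂ) 2))) :=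
    Submodule.finiteDimensional_of_le hrange
  refine ⟨h1, ?_⟩
  have h2 : Module.finrank ℂ (LinearMap.range (M : (lp (fun _ : ι => ℂ) 2) →ₗ[ℂ] (lp (fun _ : ι => ℂ) 2))) ≤ Module.finrank ℂ V :=
    Submodule.finrank_mono hrange
  refine h2.trans ?_
  have h3 : Module.finrank ℂ V ≤ (s.image (fun i => lp.single 2 i (1:ℂ))).card := by
    have h4 := finrank_span_finset_le_card (R := ℂ) (s.image (fun i => lp.single 2 i (1:ℂ)))
    rw [Set.finrank] at h4
    exact h4
  exact h3.trans (Finset.card_image_le)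

theorem isCompactOperator_of_finrank {H : Type*} [NormedAddCommGroup H] [NormedSpace ℂ H]
    (f : H →L[ℂ] H) (h : FiniteDimensional ℂ (LinearMap.range (f : H →ₗ[ℂ] H))) : IsCompactOperator f := by
  set V := LinearMap.range (f : H →ₗ[ℂ] H)
  refine ⟨Subtype.val '' Metric.closedBall (0 : V) ‖f‖, ?_, ?_⟩
  · exact (ProperSpace.isCompact_closedBall _ _).image continuous_subtype_val
  · refine Filter.mem_of_superset (Metric.closedBall_mem_nhds (0 : H) one_pos) ?_
    intro x hx
    refine ⟨⟨f x, LinearMap.mem_range_self _ x⟩, ?_, rfl⟩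
    rw [Metric.mem_closedBall, dist_zero_right]
    calc ‖(⟨f x, LinearMap.mem_range_self _ x⟩ : V)‖ = ‖f x‖ := rfl
      _ ≤ ‖f‖ * ‖x‖ := f.le_opNorm x
      _ ≤ ‖f‖ * 1 := by
          refine mul_le_mul_of_nonneg_left ?_ (norm_nonneg _)
          simpa [dist_zero_right] using hx
      _ = ‖f‖ := mul_one _

theorem sv_nonneg {H : Type*} [NormedAddCommGroup H] [InnerProductSpace ℂ H]
    (T : H →L[ℂ] H) (m : ℕ) : 0 ≤ sv T m :=
  Real.iInf_nonneg fun _ => norm_nonneg _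

theorem sv_le {H : Type*} [NormedAddCommGroup H] [InnerProductSpace ℂ H]
    (T F : H →L[ℂ] H) (m : ℕ) (h1 : FiniteDimensional ℂ (LinearMap.range (F : H →ₗ[ℂ] H)))
    (h2 : Module.finrank ℂ (LinearMap.range (F : H →ₗ[ℂ] H)) ≤ m) : sv T m ≤ ‖T - F‖ := by
  refine ciInf_le ⟨0, ?_⟩ (⟨F, h1, h2⟩ : {F : H →L[ℂ] H // _})
  rintro x ⟨G, rfl⟩
  exact norm_nonneg _

end SpecHelp


open SpecHelp

section SA
variable {Γ : Type*} [Group Γ] [DecidableEq Γ] (S : Set Γ)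
  (D : lp (fun _ : Γ => ℂ) 2 →ₗ.[ℂ] lp (fun _ : Γ => ℂ) 2)
  (hdom : ∀ f : lp (fun _ : Γ => ℂ) 2,
      f ∈ D.domain ↔ Memℓp (fun g => (wordLength S g : ℂ) * f g) 2)
  (hact : ∀ f : D.domain, ∀ g : Γ,
      (D f : ∀ _ : Γ, ℂ) g = (wordLength S g : ℂ) * (f : lp (fun _ : Γ => ℂ) 2) g)

include hdom in
theorem single_mem_dom (g₀ : Γ) (c : ℂ) : lp.single 2 g₀ c ∈ D.domain := by
  classical
  rw [hdom]
  refine Memℓp.of_exponent_ge (memℓp_zero ?_) (by norm_num : (0:ENNReal) ≤ 2)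
  refine Set.Finite.subset (Set.finite_singleton g₀) ?_
  intro g hg
  simp only [Set.mem_setOf_eq] at hg
  by_contra hne
  apply hg
  have h0 : (lp.single 2 g₀ c : lp (fun _ : Γ => ℂ) 2) g = 0 :=
    lp.single_apply_ne (E := fun _ : Γ => ℂ) 2 g₀ c (by simpa using hne)
  rw [h0, mul_zero]

include hdom in
theorem dom_dense : Dense (D.domain : Set (lp (fun _ : Γ => ℂ) 2)) := by
  intro f
  refine mem_closure_of_tendsto (lp.hasSum_single (by norm_num) f) ?_
  exact Filter.Eventually.of_forall fun s =>
    Submodule.sum_mem _ fun i _ => single_mem_dom S D hdom i _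

include hact in
theorem D_symm : D.IsFormalAdjoint D := by
  intro x y
  rw [lp.inner_eq_tsum, lp.inner_eq_tsum]
  apply tsum_congr
  intro g
  rw [RCLike.inner_apply, RCLike.inner_apply, hact, hact]
  rw [map_mul]
  have : (starRingEnd ℂ) ((wordLength S g : ℂ)) = (wordLength S g : ℂ) := by
    simp
  rw [this]
  ring

include hdom hact in
theorem D_selfAdjoint : IsSelfAdjoint D := by
  classical
  have hdense := dom_dense S D hdom
  have le1 : D ≤ D† := (D_symm S D hact).le_adjoint hdense
  have key : ∀ y : D†.domain, ∀ g : Γ,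
      (D† y : ∀ _ : Γ, ℂ) g = (wordLength S g : ℂ) * (y : lp (fun _ : Γ => ℂ) 2) g := by
    intro y g
    have h1 := (LinearPMap.adjoint_isFormalAdjoint hdense) y
      ⟨lp.single 2 g 1, single_mem_dom S D hdom g 1⟩
    rw [lp.inner_single_right, lp.inner_eq_tsum] at h1
    rw [tsum_eq_single g ?_] at h1
    · rw [RCLike.inner_apply, RCLike.inner_apply] at h1
      rw [hact] at h1
      simp only [lp.single_apply_self, mul_one] at h1
      have h2 := congrArg (starRingEnd ℂ) h1
      simpa [mul_comm] using h2
    · intro j hj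
      rw [RCLike.inner_apply, hact]
      rw [lp.single_apply_ne 2 g _ hj]
      simp
  have le2 : D† ≤ D := by
    constructor
    · intro y hy
      rw [hdom]
      have he : (fun g => (wordLength S g : ℂ) * y g)
          = ((D† ⟨y, hy⟩ : lp (fun _ : Γ => ℂ) 2) : ∀ _ : Γ, ℂ) :=
        funext fun g => (key ⟨y, hy⟩ g).symm
      rw [he]
      exact lp.memℓp _
    · intro x y hxy
      apply lp.ext; funext g
      rw [key x g, hact y g, hxy]
  exact LinearPMap.isSelfAdjoint_def.mpr (le_antisymm le2 le1)

end SA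





section Res
variable {Γ : Type*} [Group Γ] [DecidableEq Γ] (S : Set Γ)

theorem norm_inv_I_sub_le (g : Γ) : ‖(Complex.I - (wordLength S g : ℂ))⁻¹‖ ≤ 1 := by
  rw [norm_inv]
  refine inv_le_one_of_one_le₀ ?_
  calc (1:ℝ) = |(Complex.I - (wordLength S g : ℂ)).im| := by simp
    _ ≤ ‖Complex.I - (wordLength S g : ℂ)‖ := Complex.abs_im_le_norm _
    _ = ‖_‖ := rfl

theorem norm_inv_I_sub_le' (n : ℕ) (g : Γ) (h : ¬((wordLength S g : ℝ) ≤ n)) :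
    ‖(Complex.I - (wordLength S g : ℂ))⁻¹‖ ≤ ((n:ℝ)+1)⁻¹ := by
  rw [norm_inv]
  refine inv_anti₀ (by positivity) ?_
  calc ((n:ℝ)+1) ≤ (wordLength S g : ℝ) := by
        push_neg at h
        have : (n:ℝ) < (wordLength S g : ℝ) := h
        exact_mod_cast Nat.succ_le_of_lt (by exact_mod_cast this)
    _ = |(Complex.I - (wordLength S g : ℂ)).re| := by
        simp [abs_of_nonpos]
    _ ≤ ‖Complex.I - (wordLength S g : ℂ)‖ := Complex.abs_re_le_norm _
    _ = ‖_‖ := rfl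

theorem resolvent_exists
    (hgrowthFin : ∀ k : ℕ, ({g : Γ | (wordLength S g : ℝ) ≤ k}).Finite)
    (D : lp (fun _ : Γ => ℂ) 2 →ₗ.[ℂ] lp (fun _ : Γ => ℂ) 2)
    (hact : ∀ f : D.domain, ∀ g : Γ,
      (D f : ∀ _ : Γ, ℂ) g = (wordLength S g : ℂ) * (f : lp (fun _ : Γ => ℂ) 2) g) :
    ∃ R : lp (fun _ : Γ => ℂ) 2 →L[ℂ] lp (fun _ : Γ => ℂ) 2,
      IsCompactOperator R ∧
      ∀ f : D.domain,
        R (Complex.I • (f : lp (fun _ : Γ => ℂ) 2) - D f) = (f : lp (fun _ : Γ => ℂ) 2) := by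
  classical
  set a : Γ → ℂ := fun g => (Complex.I - (wordLength S g : ℂ))⁻¹ with ha_def
  have ha : ∀ g, ‖a g‖ ≤ 1 := fun g => norm_inv_I_sub_le S g
  set R := mulOp a zero_le_one ha with hR
  have haN : ∀ n : ℕ, ∀ g, ‖(if (wordLength S g : ℝ) ≤ (n:ℝ) then a g else 0)‖ ≤ 1 := by
    intro n g
    split
    · exact ha g
    · simp
  set RN : ℕ → _ := fun n =>
    mulOp (fun g => if (wordLength S g : ℝ) ≤ (n:ℝ) then a g else 0) zero_le_one (haN n) with hRN
  have hcomp : ∀ n, IsCompactOperator (RN n) := by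
    intro n
    refine isCompactOperator_of_finrank _ ?_
    refine (mulOp_finrank _ (RN n) (fun f i => mulOp_apply _ _ _ f i)
      (hgrowthFin n).toFinset ?_).1
    intro i hi
    rw [Set.Finite.mem_toFinset] at hi
    simp only [Set.mem_setOf_eq] at hi
    rw [if_neg hi]
  have hdiff : ∀ n : ℕ, ‖R - RN n‖ ≤ ((n:ℝ)+1)⁻¹ := by
    intro n
    have hab : ∀ g, ‖a g - (if (wordLength S g : ℝ) ≤ (n:ℝ) then a g else 0)‖ ≤ ((n:ℝ)+1)⁻¹ := by
      intro g
      split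
      · simpa using by positivity
      · next h =>
          rw [sub_zero]
          exact norm_inv_I_sub_le' S n g h
    rw [mulOp_sub a _ zero_le_one zero_le_one (by positivity) ha (haN n) hab]
    exact mulOp_norm_le _ _ _
  have htend : Filter.Tendsto RN Filter.atTop (nhds R) := by
    rw [tendsto_iff_norm_sub_tendsto_zero]
    refine squeeze_zero (g := fun n : ℕ => ((n:ℝ)+1)⁻¹) (fun n => norm_nonneg _) (fun n => ?_) ?_
    · rw [norm_sub_rev]; exact hdiff n
    · simpa [one_div] using (tendsto_one_div_add_atTop_nhds_zero_nat : Filter.Tendsto (fun n : ℕ => 1 / ((n:ℝ) + 1)) Filter.atTop (nhds 0))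
  have hRcomp : IsCompactOperator R :=
    isClosed_setOf_isCompactOperator.mem_of_tendsto htend
      (Filter.Eventually.of_forall hcomp)
  refine ⟨R, hRcomp, ?_⟩
  intro f
  apply lp.ext; funext g
  rw [mulOp_apply]
  have hc : ((Complex.I • (f : lp (fun _ : Γ => ℂ) 2) - D f : lp (fun _ : Γ => ℂ) 2) : ∀ _ : Γ, ℂ) g
      = Complex.I * (f : lp (fun _ : Γ => ℂ) 2) g - (wordLength S g : ℂ) * (f : lp (fun _ : Γ => ℂ) 2) g := by
    rw [lp.coeFn_sub, Pi.sub_apply, lp.coeFn_smul, Pi.smul_apply, smul_eq_mul, hact]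
  rw [hc]
  have hne : Complex.I - (wordLength S g : ℂ) ≠ 0 := by
    intro h
    have := congrArg Complex.im h
    simp at this
  rw [show Complex.I * (f : lp (fun _ : Γ => ℂ) 2) g
        - (wordLength S g : ℂ) * (f : lp (fun _ : Γ => ℂ) 2) g
      = (Complex.I - (wordLength S g : ℂ)) * (f : lp (fun _ : Γ => ℂ) 2) g by ring]
  rw [ha_def, ← mul_assoc, inv_mul_cancel₀ hne, one_mul]

end Res





section Tr
variable {Γ : Type*} [Group Γ] [DecidableEq Γ] (S : Set Γ)

set_option maxHeartbeats 2000000 in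
theorem trace_part
    (r C : ℝ) (hr : 0 ≤ r) (hC : 0 < C)
    (hgrowth : ∀ k : ℕ, ({g : Γ | (wordLength S g : ℝ) ≤ k}).Finite ∧
      (Nat.card {g : Γ | (wordLength S g : ℝ) ≤ k} : ℝ) ≤ C * (1 + (k : ℝ)) ^ r)
    (p : ℝ) (hp : r + 1 < p) :
    ∃ M : lp (fun _ : Γ => ℂ) 2 →L[ℂ] lp (fun _ : Γ => ℂ) 2,
      (∀ f : lp (fun _ : Γ => ℂ) 2, ∀ g : Γ,
        (M f : ∀ _ : Γ, ℂ) g = (((1 + (wordLength S g : ℝ) ^ 2) ^ (-(p / 2)) : ℝ) : ℂ) * f g) ∧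
      Summable (fun m => sv M m) := by
  classical
  have hp0 : 0 < p := by linarith
  set w : Γ → ℝ := fun g => (1 + (wordLength S g : ℝ) ^ 2) ^ (-(p / 2)) with hw
  have hwpos : ∀ g, 0 < w g := fun g => Real.rpow_pos_of_pos (by positivity) _
  set a : Γ → ℂ := fun g => ((w g : ℝ) : ℂ) with ha_def
  have hanorm : ∀ g, ‖a g‖ = w g := by
    intro g
    rw [Complex.norm_real, Real.norm_eq_abs, abs_of_pos (hwpos g)]
  have ha : ∀ g, ‖a g‖ ≤ 1 := by
    intro g
    rw [hanorm]
    exact Real.rpow_le_one_of_one_le_of_nonpos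
      (by nlinarith [sq_nonneg ((wordLength S g : ℝ))]) (by linarith)
  set M := mulOp a zero_le_one ha with hM
  refine ⟨M, fun f g => ?_, ?_⟩
  · rw [hM, mulOp_apply]
  -- off-ball bound for the weight
  have hoff : ∀ (n : ℕ) (g : Γ), ¬((wordLength S g : ℝ) ≤ (n:ℝ)) →
      w g ≤ ((1 + (n:ℝ))^2 / 2) ^ (-(p/2)) := by
    intro n g h
    push_neg at h
    have hn1 : (1 + (n:ℝ)) ≤ (wordLength S g : ℝ) := by
      have : (n:ℝ) < (wordLength S g : ℝ) := h
      have h2 : n + 1 ≤ wordLength S g := by exact_mod_cast Nat.succ_le_of_lt (by exact_mod_cast this)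
      have := (Nat.cast_le (α := ℝ)).mpr h2
      push_cast at this
      linarith
    refine Real.rpow_le_rpow_of_nonpos (by positivity) ?_ (by linarith)
    nlinarith [sq_nonneg (wordLength S g : ℝ)]
  -- truncations and the sv bound
  have key : ∀ (n m : ℕ), (Nat.card {g : Γ | (wordLength S g : ℝ) ≤ (n:ℝ)} ≤ m) →
      sv M m ≤ ((1 + (n:ℝ))^2 / 2) ^ (-(p/2)) := by
    intro n m hnm
    set b : ℝ := ((1 + (n:ℝ))^2 / 2) ^ (-(p/2)) with hb
    have hbpos : 0 < b := Real.rpow_pos_of_pos (by positivity) _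
    have haN : ∀ g, ‖(if (wordLength S g : ℝ) ≤ (n:ℝ) then a g else 0)‖ ≤ 1 := by
      intro g; split
      · exact ha g
      · simp
    set F := mulOp (fun g => if (wordLength S g : ℝ) ≤ (n:ℝ) then a g else 0) zero_le_one haN
      with hF
    have hfr := mulOp_finrank _ F (fun f i => mulOp_apply _ _ _ f i)
      ((hgrowth n).1).toFinset (by
        intro i hi
        rw [Set.Finite.mem_toFinset] at hi
        simp only [Set.mem_setOf_eq] at hi
        rw [if_neg hi])
    have hcard : ((hgrowth n).1).toFinset.card = Nat.card {g : Γ | (wordLength S g : ℝ) ≤ (n:ℝ)} := by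
      exact ((Nat.card_coe_set_eq _).trans
        (Set.ncard_eq_toFinset_card _ ((hgrowth n).1))).symm
    refine (sv_le M F m hfr.1 (hfr.2.trans (by rw [hcard]; exact hnm))).trans ?_
    have hab : ∀ g, ‖a g - (if (wordLength S g : ℝ) ≤ (n:ℝ) then a g else 0)‖ ≤ b := by
      intro g; split
      · simpa using hbpos.le
      · next h =>
          rw [sub_zero, hanorm]
          exact hoff n g h
    rw [hM, hF, mulOp_sub a _ zero_le_one zero_le_one hbpos.le ha haN hab]
    exact mulOp_norm_le _ _ _
  -- arithmetic
  have hr1 : (0:ℝ) < r + 1 := by linarith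
  set q : ℝ := p / (r + 1) with hq_def
  have hq : 1 < q := (one_lt_div hr1).mpr (by linarith)
  set m₀ : ℕ := ⌈C * 2 ^ (r+1)⌉₊ + 1 with hm₀_def
  set K : ℝ := (8:ℝ) ^ (p/2) * C ^ q with hK_def
  have h2r1 : (1:ℝ) ≤ 2 ^ (r+1) := by
    have := Real.rpow_le_rpow_of_exponent_le (one_le_two) (le_of_lt hr1)
    rwa [Real.rpow_zero] at this
  have hbound : ∀ j : ℕ, sv M (j + m₀) ≤ K * ((j + m₀ : ℕ):ℝ) ^ (-q) := by
    intro j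
    set m : ℕ := j + m₀ with hm_def
    have hm2 : C * 2 ^ (r+1) ≤ (m:ℝ) := by
      refine (Nat.le_ceil _).trans ?_
      have h1 : ⌈C * 2 ^ (r+1)⌉₊ ≤ m := by omega
      exact_mod_cast h1
    have hmC : C ≤ (m:ℝ) := le_trans (by nlinarith) hm2
    have hmpos : (0:ℝ) < m := lt_of_lt_of_le hC hmC
    have hdiv1 : (1:ℝ) ≤ (m:ℝ)/C := (one_le_div hC).mpr hmC
    set t : ℝ := ((m:ℝ)/C) ^ (1/(r+1)) with ht_def
    have htpos : 0 < t := Real.rpow_pos_of_pos (by positivity) _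
    have ht2 : 2 ≤ t := by
      have h8 : (2:ℝ)^(r+1) ≤ (m:ℝ)/C := (le_div_iff₀ hC).mpr (by linarith [hm2])
      calc (2:ℝ) = ((2:ℝ)^(r+1))^(1/(r+1)) := by
            rw [← Real.rpow_mul (by norm_num), mul_one_div, div_self hr1.ne', Real.rpow_one]
        _ ≤ t := Real.rpow_le_rpow (by positivity) h8 (by positivity)
    have hfl1 : 1 ≤ ⌊t⌋₊ := Nat.le_floor (by exact_mod_cast (by linarith : (1:ℝ) ≤ t))
    set n : ℕ := ⌊t⌋₊ - 1 with hn_def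
    set F : ℝ := (⌊t⌋₊ : ℝ) with hF_def
    have hn1F : (1 + (n:ℝ)) = F := by
      have h1 : 1 + n = ⌊t⌋₊ := by omega
      rw [hF_def, ← h1]
      push_cast
      ring
    have hFle : F ≤ t := Nat.floor_le (by positivity)
    have htF : t/2 ≤ F := by
      have := Nat.sub_one_lt_floor t
      rw [hF_def]
      linarith
    -- card of the ball of radius n is at most m
    have hcard : Nat.card {g : Γ | (wordLength S g : ℝ) ≤ (n:ℝ)} ≤ m := by
      have h1 := (hgrowth n).2
      have h2 : C * (1 + (n:ℝ))^r ≤ C * t^r := by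
        rw [hn1F]
        exact mul_le_mul_of_nonneg_left (Real.rpow_le_rpow (by positivity) hFle hr) hC.le
      have h3 : C * t^r ≤ (m:ℝ) := by
        have ht_r : t^r = ((m:ℝ)/C) ^ ((1/(r+1))*r) := by
          rw [ht_def, ← Real.rpow_mul (by positivity)]
        have hexp : (1/(r+1))*r ≤ 1 := by
          rw [div_mul_eq_mul_div, one_mul]
          exact (div_le_one hr1).mpr (by linarith)
        have h4 : ((m:ℝ)/C) ^ ((1/(r+1))*r) ≤ ((m:ℝ)/C) ^ (1:ℝ) :=
          Real.rpow_le_rpow_of_exponent_le hdiv1 hexp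
        rw [Real.rpow_one] at h4
        calc C * t^r ≤ C * ((m:ℝ)/C) := by
              rw [ht_r]
              exact mul_le_mul_of_nonneg_left h4 hC.le
          _ = (m:ℝ) := by
              rw [mul_comm, div_mul_cancel₀ _ hC.ne']
      exact_mod_cast (Nat.cast_le (α := ℝ)).mp (h1.trans (h2.trans h3))
    -- apply key and estimate
    have h5 := key n m hcard
    -- now bound ((1+n)^2/2)^(-(p/2)) ≤ K * m^(-q)
    have hbase_pos : (0:ℝ) < (t/2)^2/2 := by positivity
    have hbase_le : (t/2)^2/2 ≤ (1 + (n:ℝ))^2/2 := by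
      rw [hn1F]
      have h6 : 0 < t/2 := by linarith
      nlinarith
    have h7 : ((1 + (n:ℝ))^2/2) ^ (-(p/2)) ≤ ((t/2)^2/2) ^ (-(p/2)) :=
      Real.rpow_le_rpow_of_nonpos hbase_pos hbase_le (by linarith)
    have h8 : ((t/2)^2/2 : ℝ) = t^2 * (8:ℝ)⁻¹ := by ring
    have h9 : ((t/2)^2/2) ^ (-(p/2)) = t ^ (-p) * (8:ℝ)^(p/2) := by
      rw [h8, Real.mul_rpow (by positivity) (by positivity)]
      congr 1
      · rw [← Real.rpow_natCast t 2, ← Real.rpow_mul htpos.le]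
        congr 1
        push_cast
        ring
      · rw [Real.inv_rpow (by norm_num), Real.rpow_neg (by norm_num), inv_inv]
    have h10 : t ^ (-p) = (m:ℝ)^(-q) * C^q := by
      rw [ht_def, ← Real.rpow_mul (by positivity)]
      have : (1/(r+1)) * (-p) = -q := by
        rw [hq_def]
        field_simp
      rw [this, div_eq_mul_inv, Real.mul_rpow (by positivity) (by positivity),
        Real.inv_rpow hC.le, Real.rpow_neg hC.le q, inv_inv]
    calc sv M m ≤ ((1 + (n:ℝ))^2/2) ^ (-(p/2)) := h5
      _ ≤ ((t/2)^2/2) ^ (-(p/2)) := h7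
      _ = (m:ℝ)^(-q) * C^q * (8:ℝ)^(p/2) := by rw [h9, h10]
      _ = K * (m:ℝ)^(-q) := by rw [hK_def]; ring
  -- conclude summability
  have hsum0 : Summable (fun n : ℕ => ((n:ℝ)) ^ (-q)) :=
    Real.summable_nat_rpow.mpr (by linarith)
  have hsum1 : Summable (fun j : ℕ => ((j + m₀ : ℕ):ℝ) ^ (-q)) :=
    (summable_nat_add_iff m₀).mpr hsum0
  have hsum3 : Summable (fun j : ℕ => sv M (j + m₀)) :=
    Summable.of_nonneg_of_le (fun j => sv_nonneg M _) hbound (hsum1.mul_left K)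
  exact (summable_nat_add_iff m₀).mp hsum3

end Tr

set_option maxHeartbeats 2000000 in
/-- Let `Γ` be a finitely generated group of polynomial growth `r` with
word-length function `L`, and let `D` be the (unbounded) operator of multiplication by `L` on
`ℓ²(Γ)` (with its natural maximal domain).  Then `D` is self-adjoint, has compact resolvent
(`(i - D)⁻¹` is a compact operator), and `(1 + D²)^{-p/2}` — the operator of multiplication by
`(1 + L(g)²)^{-p/2}` — is trace class for every `p > r + 1`. -/
theorem multiplication_by_word_length_spectral_triple
    {Γ : Type*} [Group Γ] (S : Set Γ) (hSfin : S.Finite) (hSsymm : S⁻¹ = S)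
    (hSgen : Subgroup.closure S = ⊤)
    (r C : ℝ) (hr : 0 ≤ r) (hC : 0 < C)
    (hgrowth : ∀ k : ℕ, ({g : Γ | (wordLength S g : ℝ) ≤ k}).Finite ∧
      (Nat.card {g : Γ | (wordLength S g : ℝ) ≤ k} : ℝ) ≤ C * (1 + (k : ℝ)) ^ r)
    (D : lp (fun _ : Γ => ℂ) 2 →ₗ.[ℂ] lp (fun _ : Γ => ℂ) 2)
    (hdom : ∀ f : lp (fun _ : Γ => ℂ) 2,
      f ∈ D.domain ↔ Memℓp (fun g => (wordLength S g : ℂ) * f g) 2)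
    (hact : ∀ f : D.domain, ∀ g : Γ,
      (D f : ∀ _ : Γ, ℂ) g = (wordLength S g : ℂ) * (f : lp (fun _ : Γ => ℂ) 2) g) :
    IsSelfAdjoint D ∧
    (∃ R : lp (fun _ : Γ => ℂ) 2 →L[ℂ] lp (fun _ : Γ => ℂ) 2,
      IsCompactOperator R ∧
      ∀ f : D.domain,
        R (Complex.I • (f : lp (fun _ : Γ => ℂ) 2) - D f) = (f : lp (fun _ : Γ => ℂ) 2)) ∧
    (∀ p : ℝ, r + 1 < p →
      ∃ M : lp (fun _ : Γ => ℂ) 2 →L[ℂ] lp (fun _ : Γ => ℂ) 2,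
        (∀ f : lp (fun _ : Γ => ℂ) 2, ∀ g : Γ,
          (M f : ∀ _ : Γ, ℂ) g = (((1 + (wordLength S g : ℝ) ^ 2) ^ (-(p / 2)) : ℝ) : ℂ) * f g) ∧
        Summable (fun m => sv M m)) := by
  letI : DecidableEq Γ := Classical.decEq Γ
  exact ⟨D_selfAdjoint S D hdom hact,
    resolvent_exists S (fun k => (hgrowth k).1) D hact,
    fun p hp => trace_part S r C hr hC hgrowth p hp⟩
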